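/- Let N ≥ 1 be an integer and n > 0 a real number. Set α₀ = N/(2+Nn), β = (1 - α₀ n)/2 = 1/(2+Nn), κ = (2/(2+Nn))^{1/n}, and define f : ℝ^N → ℂ by f(y) = κ e^{i|y|²/4}. Then f is an explicit nonlinear eigenfunction of the forward self-similar problem for the quasilinear Schrödinger equation with m = 1: it satisfies i Δ(|f|^n f) + β (y·∇f) + α₀ f = 0 on ℝ^N. -/

import Mathlib

open MeasureTheory Filter Complex

noncomputable section

/-- `ℝ^N`. -/
abbrev Sp (N : ℕ) : Type := EuclideanSpace ℝ (Fin N)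

/-- Partial derivative `∂/∂y_i`. -/
def pd {N : ℕ} (i : Fin N) (f : Sp N → ℂ) : Sp N → ℂ :=
  fun y => fderiv ℝ f y (EuclideanSpace.single i 1)

/-- The Laplacian `Δ = Σ_i ∂²/∂y_i²`. -/
def lap {N : ℕ} (f : Sp N → ℂ) : Sp N → ℂ :=
  fun y => ∑ i, pd i (pd i f) y

/-- The iterated negative Laplacian `(-Δ)^m`. -/
def negLapPow {N : ℕ} (m : ℕ) (f : Sp N → ℂ) : Sp N → ℂ :=
  (fun g : Sp N → ℂ => fun y => -(lap g y))^[m] f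

/-- The Euler operator `y · ∇`. -/
def euler {N : ℕ} (f : Sp N → ℂ) : Sp N → ℂ :=
  fun y => ∑ i, (y i : ℂ) * pd i f y

/-- The rescaled Schrödinger operator `B v = -i(-Δ)^m v + (1/2m) y·∇v + (N/2m) v`. -/
def Bop {N : ℕ} (m : ℕ) (f : Sp N → ℂ) : Sp N → ℂ :=
  fun y => -Complex.I * negLapPow m f y + (1/(2*(m:ℂ))) * euler f y
    + ((N:ℂ)/(2*(m:ℂ))) * f y

/-- The adjoint rescaled operator `B* v = -i(-Δ)^m v - (1/2m) y·∇v`. -/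
def Bstar {N : ℕ} (m : ℕ) (f : Sp N → ℂ) : Sp N → ℂ :=
  fun y => -Complex.I * negLapPow m f y - (1/(2*(m:ℂ))) * euler f y

/-- The multiindex derivative `D^β = ∂^{β₁}_{y₁} ⋯ ∂^{β_N}_{y_N}`. -/
def Dop {N : ℕ} (β : Fin N → ℕ) (f : Sp N → ℂ) : Sp N → ℂ :=
  ((List.ofFn fun i : Fin N => (pd i)^[β i]).foldr (· ∘ ·) id) f

/-- The weighted Sobolev integrand `Σ_{k=0}^{2m} |D^k v(y)|² = Σ_{|β| ≤ 2m} |D^β v(y)|²`. -/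
def sobSum {N : ℕ} (m : ℕ) (v : Sp N → ℂ) (y : Sp N) : ℝ :=
  ∑ k ∈ Finset.range (2*m+1), ∑ β ∈ Finset.Nat.antidiagonalTuple N k, ‖Dop β v y‖ ^ 2

/-- The weight `ρ(y) = exp(-|y|^α)`, `α = 2m/(2m-1)`. -/
def rho {N : ℕ} (m : ℕ) (y : Sp N) : ℝ :=
  Real.exp (-(‖y‖ ^ ((2*(m:ℝ))/(2*(m:ℝ)-1))))

/-- The weight `ρ*(y) = exp(|y|^α)`, `α = 2m/(2m-1)`. -/
def rhoStar {N : ℕ} (m : ℕ) (y : Sp N) : ℝ :=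
  Real.exp (‖y‖ ^ ((2*(m:ℝ))/(2*(m:ℝ)-1)))

/-- The amplitude `κ = (2/(2+Nn))^{1/n}`. -/
def kappa (N : ℕ) (n : ℝ) : ℝ := (2/(2+(N:ℝ)*n)) ^ (1/n)

/-- The explicit profile `f(y) = κ e^{i|y|²/4}`. -/
def fprof (N : ℕ) (n : ℝ) : Sp N → ℂ :=
  fun y => ((kappa N n : ℝ) : ℂ) * Complex.exp (Complex.I * ((‖y‖ ^ 2 : ℝ) : ℂ) / 4)

/-! ### Auxiliary lemmas -/

lemma hasFDerivAt_fprof (N : ℕ) (n : ℝ) (y : Sp N) :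
    HasFDerivAt (fprof N n)
      ((fprof N n y * (Complex.I / 2)) • (Complex.ofRealCLM.comp (innerSL ℝ y))) y := by
  have h1 : HasFDerivAt (fun z : Sp N => ‖z‖ ^ 2) ((2:ℕ) • innerSL ℝ y) y :=
    (hasStrictFDerivAt_norm_sq y).hasFDerivAt
  have h2 : HasFDerivAt (fun z : Sp N => ((‖z‖ ^ 2 : ℝ) : ℂ))
      (Complex.ofRealCLM.comp ((2:ℕ) • innerSL ℝ y)) y :=
    Complex.ofRealCLM.hasFDerivAt.comp y h1
  have h3 := ((h2.const_mul (Complex.I/4)).cexp).const_mul (((kappa N n : ℝ) : ℂ))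
  have h4 : HasFDerivAt (fprof N n)
      (((kappa N n : ℝ) : ℂ) •
        (Complex.exp (Complex.I / 4 * ((‖y‖ ^ 2 : ℝ) : ℂ)) •
          ((Complex.I / 4) • (Complex.ofRealCLM.comp ((2:ℕ) • innerSL ℝ y))))) y := by
    refine h3.congr_of_eventuallyEq (Filter.EventuallyEq.of_eq (funext fun z => ?_))
    rw [fprof]
    congr 1
    congr 1
    ring
  have hexp : Complex.exp (Complex.I / 4 * ((‖y‖ ^ 2 : ℝ) : ℂ))
      = Complex.exp (Complex.I * ((‖y‖ ^ 2 : ℝ) : ℂ) / 4) := by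
    congr 1; ring
  have hD : ((fprof N n y * (Complex.I / 2)) • (Complex.ofRealCLM.comp (innerSL ℝ y)))
      = (((kappa N n : ℝ) : ℂ) •
        (Complex.exp (Complex.I / 4 * ((‖y‖ ^ 2 : ℝ) : ℂ)) •
          ((Complex.I / 4) • (Complex.ofRealCLM.comp ((2:ℕ) • innerSL ℝ y))))) := by
    ext v
    simp only [ContinuousLinearMap.smul_apply, ContinuousLinearMap.coe_comp,
      Function.comp_apply, Complex.ofRealCLM_apply, smul_eq_mul, fprof, hexp,
      ContinuousLinearMap.coe_smul', Pi.smul_apply, coe_innerSL_apply,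
      ContinuousLinearMap.comp_apply, nsmul_eq_mul, Nat.cast_ofNat]
    push_cast
    ring
  rw [hD]
  exact h4

lemma differentiable_fprof (N : ℕ) (n : ℝ) : Differentiable ℝ (fprof N n) :=
  fun y => (hasFDerivAt_fprof N n y).differentiableAt

lemma inner_single_one (N : ℕ) (y : Sp N) (i : Fin N) :
    (inner ℝ y (EuclideanSpace.single i (1:ℝ)) : ℝ) = y i := by
  rw [EuclideanSpace.inner_single_right]; simp

lemma pd_fprof (N : ℕ) (n : ℝ) (i : Fin N) (y : Sp N) :
    pd i (fprof N n) y = fprof N n y * (Complex.I * (y i) / 2) := by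
  rw [pd, (hasFDerivAt_fprof N n y).fderiv]
  simp only [ContinuousLinearMap.smul_apply, ContinuousLinearMap.comp_apply,
    Complex.ofRealCLM_apply, innerSL_apply_apply, smul_eq_mul, inner_single_one]
  ring

lemma hasFDerivAt_coord (N : ℕ) (i : Fin N) (y : Sp N) :
    HasFDerivAt (fun z : Sp N => ((z i : ℝ) : ℂ))
      (Complex.ofRealCLM.comp (EuclideanSpace.proj i)) y :=
  (Complex.ofRealCLM.comp (EuclideanSpace.proj (𝕜 := ℝ) i)).hasFDerivAt

lemma hasFDerivAt_pdfprof (N : ℕ) (n : ℝ) (i : Fin N) (y : Sp N) :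
    HasFDerivAt (fun z : Sp N => fprof N n z * (Complex.I * (z i) / 2))
      ((fprof N n y) • ((Complex.I / 2) •
          (Complex.ofRealCLM.comp (EuclideanSpace.proj i))) +
        (((fprof N n y * (Complex.I / 2)) •
          (Complex.ofRealCLM.comp (innerSL ℝ y))).smulRight (Complex.I * (y i) / 2))) y := by
  have hc : HasFDerivAt (fun z : Sp N => Complex.I * ((z i : ℝ) : ℂ) / 2)
      ((Complex.I / 2) • (Complex.ofRealCLM.comp (EuclideanSpace.proj i))) y := by
    refine ((hasFDerivAt_coord N i y).const_mul (Complex.I / 2)).congr_of_eventuallyEq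
      (Filter.EventuallyEq.of_eq (funext fun z => ?_))
    ring
  exact (hasFDerivAt_fprof N n y).mul' hc

lemma differentiable_pdfprof (N : ℕ) (n : ℝ) (i : Fin N) :
    Differentiable ℝ (fun z : Sp N => fprof N n z * (Complex.I * (z i) / 2)) :=
  fun y => (hasFDerivAt_pdfprof N n i y).differentiableAt

lemma proj_single_one (N : ℕ) (i : Fin N) :
    (EuclideanSpace.proj (𝕜 := ℝ) i) (EuclideanSpace.single i (1:ℝ)) = 1 := by
  have : (EuclideanSpace.single i (1:ℝ)) i = 1 := by
    simp [EuclideanSpace.single_apply]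
  exact this

lemma pd_F (N : ℕ) (n : ℝ) (i : Fin N) (y : Sp N) :
    pd i (fun z : Sp N => fprof N n z * (Complex.I * (z i) / 2)) y
      = fprof N n y * ((Complex.I * (y i) / 2) ^ 2 + Complex.I / 2) := by
  rw [pd, (hasFDerivAt_pdfprof N n i y).fderiv]
  simp only [ContinuousLinearMap.add_apply, ContinuousLinearMap.smul_apply,
    ContinuousLinearMap.comp_apply, Complex.ofRealCLM_apply, innerSL_apply_apply,
    smul_eq_mul, ContinuousLinearMap.smulRight_apply, inner_single_one, proj_single_one]
  push_cast
  ring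

lemma pd_pd_fprof (N : ℕ) (n : ℝ) (i : Fin N) (y : Sp N) :
    pd i (pd i (fprof N n)) y
      = fprof N n y * ((Complex.I * (y i) / 2) ^ 2 + Complex.I / 2) := by
  have hfun : pd i (fprof N n) = fun z : Sp N => fprof N n z * (Complex.I * (z i) / 2) := by
    funext z; exact pd_fprof N n i z
  rw [hfun]
  exact pd_F N n i y

lemma norm_sq_sum (N : ℕ) (y : Sp N) : (‖y‖ ^ 2 : ℝ) = ∑ i, (y i) ^ 2 := by
  rw [← real_inner_self_eq_norm_sq]
  simp only [PiLp.inner_apply, RCLike.inner_apply, conj_trivial, sq]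

/-- The explicit nonlinear eigenfunction of the forward self-similar problem for the
quasilinear Schrödinger equation with `m = 1`: `iΔ(|f|^n f) + β y·∇f + α₀ f = 0` with
`α₀ = N/(2+Nn)`, `β = (1-α₀ n)/2 = 1/(2+Nn)`. -/
theorem stmt_19 (N : ℕ) (hN : 1 ≤ N) (n : ℝ) (hn : 0 < n) (y : Sp N) :
    Complex.I * lap (fun z : Sp N => ((‖fprof N n z‖ ^ n : ℝ) : ℂ) * fprof N n z) y
      + (((1 - ((N:ℝ)/(2+(N:ℝ)*n)) * n)/2 : ℝ) : ℂ) * euler (fprof N n) y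
      + (((N:ℝ)/(2+(N:ℝ)*n) : ℝ) : ℂ) * fprof N n y = 0 := by
  have hd : (0:ℝ) < 2 + (N:ℝ) * n := by positivity
  have hk : (0:ℝ) < kappa N n := by
    apply Real.rpow_pos_of_pos
    positivity
  -- norm of the profile is the constant κ
  have hnorm : ∀ z : Sp N, ‖fprof N n z‖ = kappa N n := by
    intro z
    have hre : (Complex.I * ((‖z‖ ^ 2 : ℝ) : ℂ) / 4).re = 0 := by
      have : Complex.I * ((‖z‖ ^ 2 : ℝ) : ℂ) / 4 = (((‖z‖ ^ 2 / 4 : ℝ)) : ℂ) * Complex.I := by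
        push_cast; ring
      rw [this]; simp [pow_two, Complex.mul_im]
    rw [fprof, norm_mul, Complex.norm_real, Complex.norm_exp, hre,
      Real.exp_zero, mul_one, Real.norm_eq_abs, abs_of_pos hk]
  have hkn : (kappa N n) ^ n = 2 / (2 + (N:ℝ) * n) := by
    rw [kappa, ← Real.rpow_mul (by positivity : (0:ℝ) ≤ 2/(2+(N:ℝ)*n)),
      one_div_mul_cancel hn.ne', Real.rpow_one]
  set a : ℂ := ((2 / (2 + (N:ℝ) * n) : ℝ) : ℂ) with ha
  have hg : (fun z : Sp N => ((‖fprof N n z‖ ^ n : ℝ) : ℂ) * fprof N n z)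
      = fun z => a * fprof N n z := by
    funext z; rw [hnorm z, hkn]
  -- the coordinate sum identity
  have hs : ((‖y‖ ^ 2 : ℝ) : ℂ) = ∑ i, (((y i : ℝ)) : ℂ) ^ 2 := by
    rw [norm_sq_sum]; push_cast; rfl
  -- first derivatives of a • f
  have h1 : ∀ i : Fin N, pd i (fun z : Sp N => a * fprof N n z)
      = fun z => a * (fprof N n z * (Complex.I * (z i) / 2)) := by
    intro i; funext z
    rw [pd, fderiv_const_mul (differentiable_fprof N n z)]
    simp only [ContinuousLinearMap.smul_apply, smul_eq_mul]
    congr 1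
    exact pd_fprof N n i z
  -- second derivatives
  have h2 : ∀ i : Fin N, pd i (pd i (fun z : Sp N => a * fprof N n z)) y
      = a * (fprof N n y * ((Complex.I * (y i) / 2) ^ 2 + Complex.I / 2)) := by
    intro i
    rw [h1 i, pd, fderiv_const_mul (differentiable_pdfprof N n i y)]
    simp only [ContinuousLinearMap.smul_apply, smul_eq_mul]
    congr 1
    exact pd_F N n i y
  -- Laplacian of a • f
  have hlap : lap (fun z : Sp N => a * fprof N n z) y
      = a * (fprof N n y * (-(((‖y‖ ^ 2 : ℝ)) : ℂ) / 4 + (N : ℂ) * Complex.I / 2)) := by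
    unfold lap
    simp only [h2]
    rw [← Finset.mul_sum, ← Finset.mul_sum]
    congr 1
    congr 1
    have e1 : ∀ i : Fin N, (Complex.I * (y i) / 2) ^ 2 = -((((y i : ℝ)) : ℂ) ^ 2) / 4 := by
      intro i
      linear_combination ((((y i : ℝ)) : ℂ) ^ 2 / 4) * Complex.I_sq
    simp only [e1]
    rw [Finset.sum_add_distrib, Finset.sum_const, Finset.card_univ, Fintype.card_fin,
      nsmul_eq_mul, hs]
    rw [← Finset.sum_neg_distrib, ← Finset.sum_div]
    ring
  -- Euler term
  have heul : euler (fprof N n) y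
      = fprof N n y * (Complex.I / 2) * ((‖y‖ ^ 2 : ℝ) : ℂ) := by
    unfold euler
    simp only [pd_fprof]
    rw [hs, Finset.mul_sum]
    apply Finset.sum_congr rfl
    intro i _
    ring
  rw [hg, hlap, heul]
  have hb : ((1 - ((N:ℝ)/(2+(N:ℝ)*n)) * n)/2 : ℝ) = (2/(2+(N:ℝ)*n))/2 := by
    field_simp
    ring
  have he2 : ((N:ℝ)/(2+(N:ℝ)*n) : ℝ) = (2/(2+(N:ℝ)*n)) * N / 2 := by
    field_simp
  rw [hb, he2, ha]
  push_cast
  linear_combination (fprof N n y * (N : ℂ) * ((2 + (N:ℂ) * (n:ℂ))⁻¹)) * Complex.I_sq
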